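/- For all integers s ≥ 1 and r with r ≥ s (so 1 ≤ s ≤ r), the factorization identity S^r_s(i) = S^{s-1}_{r+1}(i) · ∏_{q=s-1}^{r-1} T(i+q) holds for every i. -/

import Mathlib

variable {R : Type*} [CommRing R]

/-- Discrete polynomials `T^r_s(i)` (case `h = n = 1`), with the convention
`T^0_s = 1` and `T^r_s = 0` for `s = 0`, `r ≥ 1`. -/
def Tp (T : ℤ → R) : ℕ → ℕ → ℤ → R
  | 0, _, _ => 1
  | _ + 1, 0, _ => 0
  | r + 1, s + 1, i => Tp T (r + 1) s (i + 1) + T i * Tp T r s (i + 2)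

/-- Discrete polynomials `S^r_s(i)` (case `h = n = 1`). -/
def Sp (T : ℤ → R) : ℕ → ℕ → ℤ → R
  | 0, _, _ => 1
  | _ + 1, 0, _ => 0
  | r + 1, 1, i => ∏ q ∈ Finset.range (r + 1), T (i + q)
  | r + 1, s + 2, i => Sp T (r + 1) (s + 1) (i + 1) + T (i + r) * Sp T r (s + 2) i
  termination_by r s _ => r + s


lemma Sp_one (T : ℤ → R) (r : ℕ) (i : ℤ) :
    Sp T r 1 i = ∏ q ∈ Finset.range r, T (i + q) := by
  cases r <;> simp [Sp]

lemma Sp_zero (T : ℤ → R) (r : ℕ) (i : ℤ) : Sp T (r+1) 0 i = 0 := by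
  rw [Sp]

lemma Sp_rec (T : ℤ → R) (r s : ℕ) (i : ℤ) :
    Sp T (r+1) (s+1) i = Sp T (r+1) s (i+1) + T (i + r) * Sp T r (s+1) i := by
  cases s with
  | zero =>
    rw [Sp_one, Sp_one, Sp_zero, Finset.prod_range_succ]
    ring
  | succ s => rw [Sp]

lemma Sp_claim (T : ℤ → R) : ∀ a b : ℕ, ∀ i : ℤ,
    T (i + b) * Sp T a (b+1) (i+1) + Sp T (a+1) b i
      = Sp T (a+1) b (i+1) + T (i + a) * Sp T a (b+1) i := by
  intro a
  induction a with
  | zero =>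
    intro b
    induction b with
    | zero =>
      intro i
      simp [Sp_zero, Sp]
    | succ b ihb =>
      intro i
      rw [Sp_rec T 0 b i, Sp_rec T 0 b (i+1)]
      have h := ihb (i+1)
      simp only [Sp] at h ⊢
      push_cast at h ⊢
      ring_nf at h ⊢
      linear_combination h
  | succ a iha =>
    intro b
    induction b with
    | zero =>
      intro i
      rw [Sp_zero, Sp_zero, Sp_one, Sp_one]
      have e1 := Finset.prod_range_succ' (fun q : ℕ => T (i + (q:ℤ))) (a+1)
      have e2 := Finset.prod_range_succ (fun q : ℕ => T (i + (q:ℤ))) (a+1)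
      have e3 : ∏ q ∈ Finset.range (a+1), T (i + 1 + (q:ℤ))
          = ∏ q ∈ Finset.range (a+1), T (i + ((q+1 : ℕ) : ℤ)) := by
        apply Finset.prod_congr rfl
        intro q _
        push_cast
        ring_nf
      rw [e3]
      push_cast at e1 e2 ⊢
      ring_nf at e1 e2 ⊢
      linear_combination e2 - e1
    | succ b ihb =>
      intro i
      rw [Sp_rec T (a+1) b i, Sp_rec T (a+1) b (i+1),
          Sp_rec T a (b+1) i, Sp_rec T a (b+1) (i+1)]
      have h1 := ihb (i+1)
      have h2 := iha (b+1) i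
      push_cast at h1 h2 ⊢
      ring_nf at h1 h2 ⊢
      linear_combination h1 + T (1 + i + (a:ℤ)) * h2

lemma Sp_key_base (T : ℤ → R) (b : ℕ) (i : ℤ) :
    Sp T (b+1) 1 i = Sp T 0 (b+2) i * ∏ q ∈ Finset.Icc 0 b, T (i + (q:ℤ)) := by
  have h0 : Sp T 0 (b+2) i = 1 := by rw [Sp]
  have h1 : Finset.Icc 0 b = Finset.range (b+1) := by
    ext x; simp [Nat.lt_succ_iff]
  rw [h0, one_mul, Sp_one, h1]

lemma Sp_key (T : ℤ → R) : ∀ n a b : ℕ, a + b ≤ n → a ≤ b + 1 → ∀ i : ℤ,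
    Sp T (b+1) (a+1) i = Sp T a (b+2) i * ∏ q ∈ Finset.Icc a b, T (i + (q:ℤ)) := by
  intro n
  induction n with
  | zero =>
    intro a b h _ i
    obtain rfl : a = 0 := by omega
    obtain rfl : b = 0 := by omega
    exact Sp_key_base T 0 i
  | succ n ih =>
    intro a b hn hab i
    match a, hab with
    | 0, _ => exact Sp_key_base T b i
    | a' + 1, hab =>
      rcases Nat.lt_or_ge b (a' + 1) with hb | hb
      · obtain rfl : b = a' := by omega
        rw [Finset.Icc_eq_empty (by omega), Finset.prod_empty, mul_one]
      · obtain ⟨b', rfl⟩ : ∃ b', b = b' + 1 := ⟨b - 1, by omega⟩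
        have eL := Sp_rec T (b'+1) (a'+1) i
        have eR := Sp_rec T a' (b'+2) i
        have h1 := ih a' (b'+1) (by omega) (by omega) (i+1)
        have h2 := ih (a'+1) b' (by omega) (by omega) i
        have hC := Sp_claim T a' (b'+2) i
        have hp1 : ∏ q ∈ Finset.Icc a' (b'+1), T (i + 1 + (q:ℤ))
            = ∏ q ∈ Finset.Icc (a'+1) (b'+2), T (i + (q:ℤ)) := by
          rw [← Finset.map_add_right_Icc a' (b'+1) 1, Finset.prod_map]
          apply Finset.prod_congr rfl
          intro q _
          simp [addRightEmbedding]
          push_cast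
          ring_nf
        have hp2 : ∏ q ∈ Finset.Icc (a'+1) (b'+2), T (i + (q:ℤ))
            = (∏ q ∈ Finset.Icc (a'+1) (b'+1), T (i + (q:ℤ))) * T (i + ((b':ℤ)+2)) := by
          have := Finset.prod_Icc_succ_top (a := a'+1) (b := b'+1) (by omega)
            (fun q : ℕ => T (i + (q:ℤ)))
          push_cast at this
          convert this using 3
          ring
        have hp3 : ∏ q ∈ Finset.Icc (a'+1) (b'+1), T (i + (q:ℤ))
            = (∏ q ∈ Finset.Icc (a'+1) b', T (i + (q:ℤ))) * T (i + ((b':ℤ)+1)) := by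
          have := Finset.prod_Icc_succ_top (a := a'+1) (b := b') (by omega)
            (fun q : ℕ => T (i + (q:ℤ)))
          push_cast at this
          convert this using 3
        push_cast at eL eR h1 h2 hC hp1 hp2 hp3 ⊢
        linear_combination eL + h1 + T (i + ((b':ℤ)+1)) * h2
          + Sp T a' (b'+3) (i+1) * hp1 + Sp T a' (b'+3) (i+1) * hp2
          - Sp T (a'+1) (b'+2) i * hp3
          + (∏ q ∈ Finset.Icc (a'+1) (b'+1), T (i + (q:ℤ))) * hC
          - (∏ q ∈ Finset.Icc (a'+1) (b'+1), T (i + (q:ℤ))) * eR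

/-- Factorization identity: for `1 ≤ s ≤ r`,
`S^r_s(i) = S^{s-1}_{r+1}(i) · ∏_{q=s-1}^{r-1} T(i+q)`. -/
theorem Sp_factorization (T : ℤ → R) (r s : ℕ) (hs : 1 ≤ s) (hsr : s ≤ r) (i : ℤ) :
    Sp T r s i = Sp T (s - 1) (r + 1) i * ∏ q ∈ Finset.Icc (s - 1) (r - 1), T (i + q) := by
  obtain ⟨a, rfl⟩ : ∃ a, s = a + 1 := ⟨s - 1, by omega⟩
  obtain ⟨b, rfl⟩ : ∃ b, r = b + 1 := ⟨r - 1, by omega⟩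
  simpa using Sp_key T (a + b) a b le_rfl (by omega) i
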